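/- Let X be a free ℤ-module of finite rank r and let W be a finite subgroup of Aut_ℤ(X). Let α ∈ X be a nonzero element, and suppose s, t ∈ W satisfy s(α) = −α, t(α) = −α, and both fixed submodules {x ∈ X : s(x) = x} and {x ∈ X : t(x) = x} are free of rank r − 1. Then s = t. -/

import Mathlib

open Module Submodule

private lemma intModule_eq {M : Type*} [AddCommGroup M] (i1 i2 : Module ℤ M) : i1 = i2 := by
  letI : Unique (Module ℤ M) := AddCommGroup.uniqueIntModule
  exact Subsingleton.elim i1 i2

private lemma refl_commensurable
    {R : Type*} [CommRing R] [IsDomain R] [IsNoetherianRing R] (h2 : (2 : R) ≠ 0)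
    {X : Type*} [AddCommGroup X] [Module R X] [Module.Free R X] [Module.Finite R X]
    {r : ℕ} (hrank : Module.finrank R X = r)
    (α : X) (hα : α ≠ 0)
    (s : X ≃ₗ[R] X) (hsα : s α = -α)
    (hsfree : Module.Free R
      (LinearMap.eqLocus (s : X →ₗ[R] X) (LinearMap.id : X →ₗ[R] X)))
    (hsfix : Module.finrank R
      (LinearMap.eqLocus (s : X →ₗ[R] X) (LinearMap.id : X →ₗ[R] X)) = r - 1) :
    ∀ x : X, ∃ c : R, c ≠ 0 ∧ ∃ m : R, c • (s x - x) = m • α := by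
  have hnt : Nontrivial X := ⟨α, 0, hα⟩
  have hr1 : 1 ≤ r := by
    have := Module.finrank_pos (R := R) (M := X)
    omega
  set K : Submodule R X := LinearMap.eqLocus (s : X →ₗ[R] X) (LinearMap.id : X →ₗ[R] X)
    with hK
  have hmemK : ∀ y : X, y ∈ K ↔ s y = y := by
    intro y; rw [hK, LinearMap.mem_eqLocus]; simp
  haveI : IsNoetherian R X := isNoetherian_of_isNoetherianRing_of_finite R X
  haveI : Module.Finite R K := Module.Finite.iff_fg.mpr (IsNoetherian.noetherian K)
  have hinf : K ⊓ span R {α} = ⊥ := by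
    rw [eq_bot_iff]
    rintro x ⟨hx1, hx2⟩
    obtain ⟨m, rfl⟩ := mem_span_singleton.mp hx2
    have h1 : s (m • α) = m • α := (hmemK _).mp hx1
    rw [LinearEquiv.map_smul, hsα, smul_neg] at h1
    have h2' : (2 : R) • (m • α) = 0 := by
      rw [two_smul]
      nth_rewrite 1 [← h1]
      abel
    rcases smul_eq_zero.mp h2' with h | h
    · exact absurd h h2
    · simp [h]
  have hli : LinearIndependent R (fun _ : Unit => α) := LinearIndependent.of_subsingleton () hα
  have hspan : Module.rank R (span R ({α} : Set X)) = 1 := by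
    have h0 : (Set.range fun _ : Unit => α) = ({α} : Set X) := Set.range_const
    have h1 := rank_span hli
    rw [h0] at h1
    rw [h1, Cardinal.mk_singleton]
  have hrankK : Module.rank R K = ((r - 1 : ℕ) : Cardinal) := by
    rw [← Module.finrank_eq_rank, hsfix]
  have h := Submodule.rank_sup_add_rank_inf_eq K (span R ({α} : Set X))
  rw [hinf, rank_bot, add_zero, hspan, hrankK] at h
  have hrankM : Module.rank R (K ⊔ span R ({α} : Set X) : Submodule R X) = (r : Cardinal) := by
    rw [h]
    have hr : r - 1 + 1 = r := by omega
    rw [← hr]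
    push_cast
    ring
  have hfinM : Module.finrank R (K ⊔ span R ({α} : Set X) : Submodule R X) = r :=
    Module.finrank_eq_of_rank_eq hrankM
  have hq : Module.finrank R (X ⧸ (K ⊔ span R ({α} : Set X))) = 0 := by
    have hqf := Submodule.finrank_quotient_add_finrank (K ⊔ span R ({α} : Set X))
    rw [hfinM, hrank] at hqf
    omega
  have htor : ∀ x : X ⧸ (K ⊔ span R ({α} : Set X)), ∃ a : R, a ≠ 0 ∧ a • x = 0 :=
    Module.finrank_eq_zero_iff.mp hq
  intro x
  obtain ⟨c, hc, hcx⟩ := htor (Submodule.Quotient.mk x)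
  rw [← Submodule.Quotient.mk_smul, Submodule.Quotient.mk_eq_zero] at hcx
  obtain ⟨y, hy, z, hz, hyz⟩ := Submodule.mem_sup.mp hcx
  obtain ⟨m, rfl⟩ := mem_span_singleton.mp hz
  refine ⟨c, hc, -(2 * m), ?_⟩
  have h1 : s y = y := (hmemK _).mp hy
  have e1 : c • (s x - x) = s (c • x) - c • x := by
    rw [smul_sub, LinearEquiv.map_smul]
  rw [e1, ← hyz, map_add, h1, LinearEquiv.map_smul, hsα, smul_neg, neg_smul, mul_smul, two_smul]
  abel


private lemma reflection_unique_aux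
    {R : Type*} [CommRing R] [IsDomain R] [IsNoetherianRing R] [CharZero R]
    {X : Type*} [AddCommGroup X] [Module R X] [Module.Free R X] [Module.Finite R X]
    {r : ℕ} (hrank : Module.finrank R X = r)
    (W : Subgroup (X ≃ₗ[R] X)) (hWfin : Finite W)
    (α : X) (hα : α ≠ 0)
    (s t : X ≃ₗ[R] X) (hs : s ∈ W) (ht : t ∈ W)
    (hsα : s α = -α) (htα : t α = -α)
    (hsfree : Module.Free R
      (LinearMap.eqLocus (s : X →ₗ[R] X) (LinearMap.id : X →ₗ[R] X)))
    (htfree : Module.Free R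
      (LinearMap.eqLocus (t : X →ₗ[R] X) (LinearMap.id : X →ₗ[R] X)))
    (hsfix : Module.finrank R
      (LinearMap.eqLocus (s : X →ₗ[R] X) (LinearMap.id : X →ₗ[R] X)) = r - 1)
    (htfix : Module.finrank R
      (LinearMap.eqLocus (t : X →ₗ[R] X) (LinearMap.id : X →ₗ[R] X)) = r - 1) :
    s = t := by
  have hAs := refl_commensurable (R := R) two_ne_zero hrank α hα s hsα hsfree hsfix
  have hAt := refl_commensurable (R := R) two_ne_zero hrank α hα t htα htfree htfix
  set u : X ≃ₗ[R] X := t⁻¹ * s with hu_def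
  have hu : u ∈ W := W.mul_mem (W.inv_mem ht) hs
  have hux : ∀ x : X, u x = t.symm (s x) := fun x => rfl
  have htsymm : t.symm α = -α := by
    have h1 : t.symm (-α) = α := by rw [← htα, LinearEquiv.symm_apply_apply]
    rw [map_neg] at h1
    exact neg_eq_iff_eq_neg.mp h1
  have hAu : ∀ x : X, ∃ c : R, c ≠ 0 ∧ ∃ m : R, c • (u x - x) = m • α := by
    intro x
    obtain ⟨c1, hc1, m1, h1⟩ := hAs x
    obtain ⟨c2, hc2, m2, h2⟩ := hAt x
    refine ⟨c1 * c2, mul_ne_zero hc1 hc2, -(c2 * m1 - c1 * m2), ?_⟩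
    have ha : (c1 * c2) • (s x - x) = (c2 * m1) • α := by
      rw [mul_comm c1 c2, mul_smul, h1, smul_smul]
    have hb : (c1 * c2) • (t x - x) = (c1 * m2) • α := by
      rw [mul_smul, h2, smul_smul]
    have h3 : (c1 * c2) • (s x - t x) = (c2 * m1 - c1 * m2) • α := by
      calc (c1 * c2) • (s x - t x)
          = (c1 * c2) • (s x - x) - (c1 * c2) • (t x - x) := by
            rw [← smul_sub]; congr 1; abel
        _ = (c2 * m1) • α - (c1 * m2) • α := by rw [ha, hb]
        _ = (c2 * m1 - c1 * m2) • α := by rw [sub_smul]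
    have h4 : t.symm ((c1 * c2) • (s x - t x)) = (c1 * c2) • (u x - x) := by
      rw [LinearEquiv.map_smul, map_sub, LinearEquiv.symm_apply_apply, ← hux x]
    rw [h3, LinearEquiv.map_smul, htsymm] at h4
    rw [← h4, smul_neg, neg_smul]
  have hα2 : u α = α := by
    rw [hux, hsα, map_neg, htsymm]; abel
  have hN0 : ∀ x : X, u (u x - x) = u x - x := by
    intro x
    obtain ⟨c, hc, m, hcm⟩ := hAu x
    have h0 : c • (u (u x - x) - (u x - x)) = 0 := by
      rw [smul_sub, ← LinearEquiv.map_smul, hcm, LinearEquiv.map_smul, hα2, sub_self]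
    rcases smul_eq_zero.mp h0 with h | h
    · exact absurd h hc
    · exact sub_eq_zero.mp h
  have key : ∀ (n : ℕ) (x : X), (u ^ n) x = x + n • (u x - x) := by
    intro n
    induction n with
    | zero => intro x; simp
    | succ n ih =>
      intro x
      have hmul : (u ^ (n + 1)) x = (u ^ n) (u x) := by rw [pow_succ]; rfl
      rw [hmul, ih (u x)]
      have hfix2 : u (u x) - u x = u x - x := by
        have := hN0 x
        rwa [map_sub] at this
      rw [hfix2, succ_nsmul]
      abel
  obtain ⟨n, hn, hpow0⟩ :=
    isOfFinOrder_iff_pow_eq_one.mp (isOfFinOrder_of_finite (⟨u, hu⟩ : W))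
  have hpow : u ^ n = 1 := by
    have := congrArg (Subtype.val) hpow0
    simpa using this
  have hufix : ∀ x : X, u x = x := by
    intro x
    have h1 : (u ^ n) x = x := by rw [hpow]; rfl
    rw [key n x] at h1
    have h2 : (n : ℕ) • (u x - x) = 0 := add_eq_left.mp h1
    have h3 : (n : R) • (u x - x) = 0 := by
      rw [Nat.cast_smul_eq_nsmul]; exact h2
    rcases smul_eq_zero.mp h3 with h | h
    · exact absurd h (by exact_mod_cast hn.ne')
    · exact sub_eq_zero.mp h
  refine LinearEquiv.ext fun x => ?_
  have h := hufix x
  rw [hux] at h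
  calc s x = t (t.symm (s x)) := (t.apply_symm_apply _).symm
    _ = t x := by rw [h]



/-- In a finite subgroup `W` of `Aut_ℤ(X)`, an element sending a fixed nonzero `α` to `-α`
and whose fixed submodule is free of rank `r - 1` is unique. -/
theorem reflection_unique_in_finite_aut_subgroup
    {X : Type*} [AddCommGroup X] [Module ℤ X] [Module.Free ℤ X] [Module.Finite ℤ X]
    {r : ℕ} (hrank : Module.finrank ℤ X = r)
    (W : Subgroup (X ≃ₗ[ℤ] X)) (hWfin : Finite W)
    (α : X) (hα : α ≠ 0)
    (s t : X ≃ₗ[ℤ] X) (hs : s ∈ W) (ht : t ∈ W)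
    (hsα : s α = -α) (htα : t α = -α)
    (hsfree : Module.Free ℤ
      (LinearMap.eqLocus (s : X →ₗ[ℤ] X) (LinearMap.id : X →ₗ[ℤ] X)))
    (htfree : Module.Free ℤ
      (LinearMap.eqLocus (t : X →ₗ[ℤ] X) (LinearMap.id : X →ₗ[ℤ] X)))
    (hsfix : Module.finrank ℤ
      (LinearMap.eqLocus (s : X →ₗ[ℤ] X) (LinearMap.id : X →ₗ[ℤ] X)) = r - 1)
    (htfix : Module.finrank ℤ
      (LinearMap.eqLocus (t : X →ₗ[ℤ] X) (LinearMap.id : X →ₗ[ℤ] X)) = r - 1) :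
    s = t := by
  have eS := intModule_eq
    (AddCommGroup.toIntModule (LinearMap.eqLocus (s : X →ₗ[ℤ] X) (LinearMap.id : X →ₗ[ℤ] X)))
    ((LinearMap.eqLocus (s : X →ₗ[ℤ] X) (LinearMap.id : X →ₗ[ℤ] X)).module)
  have eT := intModule_eq
    (AddCommGroup.toIntModule (LinearMap.eqLocus (t : X →ₗ[ℤ] X) (LinearMap.id : X →ₗ[ℤ] X)))
    ((LinearMap.eqLocus (t : X →ₗ[ℤ] X) (LinearMap.id : X →ₗ[ℤ] X)).module)
  exact reflection_unique_aux hrank W hWfin α hα s t hs ht hsα htα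
    (eS ▸ hsfree) (eT ▸ htfree) (eS ▸ hsfix) (eT ▸ htfix)
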